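/- Let K ≥ 1 and M ≥ 1 be integers and let r > 0 satisfy r·( max(1, 2K/M) + max(1, K/M) ) < 1. Then there exists a* ∈ (0, 1) such that d^MAC-sym_{2K,1,M}(r/a*) = d^MAC-sym_{K,1,M}(r/(1 − a*)) > 0, and sup_{a ∈ (0,1)} min{ d^MAC-sym_{2K,1,M}(r/a), d^MAC-sym_{K,1,M}(r/(1 − a)) } equals this common value. (This is the existence of the optimal static time allocation a* in Theorem 1 for the DF-MAC-BC scheme, whose first-phase exponent is d^MAC-sym_{2K,1,M}(r/a) and whose second-phase exponent, by MAC–BC duality, is d^MAC-sym_{K,1,M}(r/(1−a)).) -/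
import Mathlib


/-- The Zheng–Tse point-to-point DMT curve for `m` transmit and `n` receive antennas:
piecewise-linear interpolation of the points `(k, (m-k)(n-k))`, extended by `0`
for `r ≥ min m n`. -/
noncomputable def dPPC (m n : ℕ) (r : ℝ) : ℝ :=
  if min (m : ℝ) (n : ℝ) ≤ r then 0
  else ((m : ℝ) - (⌊r⌋ : ℝ)) * ((n : ℝ) - (⌊r⌋ : ℝ))
    - (r - (⌊r⌋ : ℝ)) * ((m : ℝ) + (n : ℝ) - 2 * (⌊r⌋ : ℝ) - 1)

/-- The symmetric-MAC DMT curve for `N` users, each with `m` antennas, and an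
`n`-antenna receiver. -/
noncomputable def dMACsym (N m n : ℕ) (r : ℝ) : ℝ :=
  if r ≤ min (m : ℝ) ((n : ℝ) / ((N : ℝ) + 1)) then dPPC m n r
  else dPPC (N * m) n ((N : ℝ) * r)

/-- Explicit formula on the positive region. -/
noncomputable def Gf (N M : ℕ) (ρ : ℝ) : ℝ :=
  if M ≤ N then min ((M:ℝ)*(1-ρ)) (((N:ℝ)-(M:ℝ)+1)*((M:ℝ)-(N:ℝ)*ρ))
  else (M:ℝ)*(1-ρ)

lemma Gf_cont (N M : ℕ) : Continuous (Gf N M) := by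
  unfold Gf
  split
  · exact (continuous_const.mul (continuous_const.sub continuous_id)).min
      (continuous_const.mul (continuous_const.sub (continuous_const.mul continuous_id)))
  · exact continuous_const.mul (continuous_const.sub continuous_id)

lemma Gf_anti (N M : ℕ) : Antitone (Gf N M) := by
  intro x y hxy
  unfold Gf
  split
  · next h =>
    have hMN : (M:ℝ) ≤ N := by exact_mod_cast h
    have hM0 : (0:ℝ) ≤ M := Nat.cast_nonneg M
    apply min_le_min
    · nlinarith
    · have hN0 : (0:ℝ) ≤ N := Nat.cast_nonneg N
      have hxy' : (N:ℝ)*x ≤ (N:ℝ)*y := mul_le_mul_of_nonneg_left hxy hN0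
      have := mul_le_mul_of_nonneg_left
        (show (M:ℝ)-(N:ℝ)*y ≤ (M:ℝ)-(N:ℝ)*x by linarith)
        (show (0:ℝ) ≤ (N:ℝ)-(M:ℝ)+1 by linarith)
      linarith
  · have hM0 : (0:ℝ) ≤ M := Nat.cast_nonneg M
    nlinarith

lemma Gf_pos (N M : ℕ) (hM : 1 ≤ M) (ρ : ℝ) (h1 : ρ < 1) (h2 : (N:ℝ)*ρ < M) :
    0 < Gf N M ρ := by
  have hM1 : (1:ℝ) ≤ M := by exact_mod_cast hM
  unfold Gf
  split
  · next h =>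
    have hMN : (M:ℝ) ≤ N := by exact_mod_cast h
    refine lt_min (by nlinarith) (by nlinarith)
  · nlinarith

lemma Gf_nonpos (N M : ℕ) (hM : 1 ≤ M) (ρ : ℝ)
    (h : (1:ℝ) ≤ ρ ∨ (M:ℝ) ≤ (N:ℝ)*ρ) : Gf N M ρ ≤ 0 := by
  have hM1 : (1:ℝ) ≤ M := by exact_mod_cast hM
  unfold Gf
  split
  · next hc =>
    have hMN : (M:ℝ) ≤ N := by exact_mod_cast hc
    rcases h with h | h
    · exact min_le_of_left_le (by nlinarith)
    · exact min_le_of_right_le (by nlinarith)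
  · next hc =>
    have hNM : (N:ℝ) < M := by exact_mod_cast Nat.lt_of_not_le hc
    have hN0 : (0:ℝ) ≤ N := Nat.cast_nonneg N
    rcases h with h | h
    · nlinarith
    · nlinarith

lemma dPPC_one (M : ℕ) (hM : 1 ≤ M) (ρ : ℝ) (h0 : 0 ≤ ρ) (h1 : ρ < 1) :
    dPPC 1 M ρ = (M:ℝ) * (1 - ρ) := by
  have hM1 : (1:ℝ) ≤ M := by exact_mod_cast hM
  have hmin : min ((1:ℕ):ℝ) (M:ℝ) = 1 := by
    simp [min_eq_left, hM1]
  unfold dPPC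
  rw [if_neg (by rw [hmin]; linarith)]
  have hf : ⌊ρ⌋ = 0 := Int.floor_eq_zero_iff.mpr ⟨h0, h1⟩
  rw [hf]
  push_cast
  ring

lemma dPPC_seg (N M : ℕ) (hMN : M ≤ N) (hM : 1 ≤ M) (x : ℝ)
    (h0 : (M:ℝ) - 1 ≤ x) (h1 : x < M) :
    dPPC N M x = ((N:ℝ) - M + 1) * ((M:ℝ) - x) := by
  have hMN' : (M:ℝ) ≤ N := by exact_mod_cast hMN
  have hmin : min ((N:ℕ):ℝ) (M:ℝ) = M := min_eq_right hMN'
  unfold dPPC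
  rw [if_neg (by rw [hmin]; linarith)]
  have hf : ⌊x⌋ = (M:ℤ) - 1 := by
    rw [Int.floor_eq_iff]
    constructor
    · push_cast; linarith
    · push_cast; linarith
  rw [hf]
  push_cast
  ring

lemma dMAC_zero (N M : ℕ) (hN : 1 ≤ N) (hM : 1 ≤ M) (ρ : ℝ)
    (h : (1:ℝ) ≤ ρ ∨ (M:ℝ) ≤ (N:ℝ)*ρ) : dMACsym N 1 M ρ = 0 := by
  have hM1 : (1:ℝ) ≤ M := by exact_mod_cast hM
  have hN1 : (1:ℝ) ≤ N := by exact_mod_cast hN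
  unfold dMACsym
  split
  · next hc =>
    have hρ1 : ρ ≤ 1 := le_trans hc (by simp)
    have hρM : ρ ≤ (M:ℝ)/((N:ℝ)+1) := le_trans hc (min_le_right _ _)
    have hρM' : ρ * ((N:ℝ)+1) ≤ M := by
      rw [← le_div_iff₀ (by linarith)]; exact hρM
    have h1ρ : (1:ℝ) ≤ ρ := by
      rcases h with h | h
      · exact h
      · nlinarith
    unfold dPPC
    rw [if_pos]
    simp only [Nat.cast_one]
    rw [min_eq_left hM1]
    linarith
  · unfold dPPC
    rw [if_pos]
    have : ((N*1 : ℕ):ℝ) = (N:ℝ) := by push_cast; ring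
    rw [this]
    rcases h with h | h
    · exact le_trans (min_le_left _ _) (by nlinarith)
    · exact le_trans (min_le_right _ _) h

lemma dMAC_eq (N M : ℕ) (hN : 1 ≤ N) (hM : 1 ≤ M) (ρ : ℝ)
    (h0 : 0 < ρ) (h1 : ρ < 1) (h2 : (N:ℝ)*ρ < (M:ℝ)) :
    dMACsym N 1 M ρ = Gf N M ρ := by
  have hM1 : (1:ℝ) ≤ M := by exact_mod_cast hM
  have hN1 : (1:ℝ) ≤ N := by exact_mod_cast hN
  rcases le_or_gt M N with hMN | hMN
  · have hMN' : (M:ℝ) ≤ N := by exact_mod_cast hMN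
    unfold dMACsym Gf
    rw [if_pos hMN]
    by_cases hb : ρ ≤ min ((1:ℕ):ℝ) ((M:ℝ)/((N:ℝ)+1))
    · rw [if_pos hb]
      have hρM : ρ * ((N:ℝ)+1) ≤ M := by
        rw [← le_div_iff₀ (by linarith)]
        exact le_trans hb (min_le_right _ _)
      rw [dPPC_one M hM ρ h0.le h1]
      rw [min_eq_left]
      nlinarith [mul_nonneg (sub_nonneg.2 hMN') (sub_nonneg.2 hρM)]
    · rw [if_neg hb]
      push_neg at hb
      have hmin : min (((1:ℕ)):ℝ) ((M:ℝ)/((N:ℝ)+1)) = (M:ℝ)/((N:ℝ)+1) := by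
        apply min_eq_right
        rw [div_le_iff₀ (by linarith)]
        push_cast
        nlinarith
      have hb' : (M:ℝ)/((N:ℝ)+1) < ρ := by rw [hmin] at hb; exact hb
      have hρM : (M:ℝ) < ρ * ((N:ℝ)+1) := by
        rw [div_lt_iff₀ (by linarith)] at hb'
        linarith
      have hNx : (N:ℝ) * ρ < M := h2
      have hlow : (M:ℝ) - 1 ≤ (N:ℝ)*ρ := by nlinarith
      have hNe : N * 1 = N := by ring
      rw [hNe, dPPC_seg N M hMN hM ((N:ℝ)*ρ) hlow hNx]
      rw [min_eq_right]
      nlinarith [mul_nonneg (sub_nonneg.2 hMN') (sub_nonneg.2 hρM.le)]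
  · have hMN' : (N:ℝ) + 1 ≤ M := by exact_mod_cast hMN
    unfold dMACsym Gf
    rw [if_neg (Nat.not_le.mpr hMN)]
    rw [if_pos]
    · exact dPPC_one M hM ρ h0.le h1
    · refine le_min ?_ ?_
      · simp; linarith
      · have : (1:ℝ) ≤ (M:ℝ)/((N:ℝ)+1) := by
          rw [le_div_iff₀ (by linarith)]; linarith
        linarith

lemma key (c r a M' : ℝ) (hr : 0 < r) (ha : 0 < a) (hM : 0 < M')
    (h : r * max 1 (c/M') < a) : r/a < 1 ∧ c*(r/a) < M' := by
  constructor
  · rw [div_lt_one ha]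
    nlinarith [le_max_left (1:ℝ) (c/M')]
  · have h2 : r * (c/M') < a :=
      lt_of_le_of_lt (mul_le_mul_of_nonneg_left (le_max_right _ _) hr.le) h
    have h3 : r * c < a * M' := by
      have h' := mul_lt_mul_of_pos_right h2 hM
      rwa [mul_assoc, div_mul_cancel₀ c (ne_of_gt hM)] at h'
    rw [show c*(r/a) = c*r/a from (mul_div_assoc c r a).symm, div_lt_iff₀ ha]
    linarith

lemma key2 (c r a M' : ℝ) (hr : 0 < r) (ha : 0 < a) (hM : 0 < M')
    (h : a ≤ r * max 1 (c/M')) : 1 ≤ r/a ∨ M' ≤ c*(r/a) := by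
  rcases max_cases (1:ℝ) (c/M') with ⟨he, _⟩ | ⟨he, _⟩
  · left
    rw [he, mul_one] at h
    rw [le_div_iff₀ ha]; linarith
  · right
    rw [he] at h
    have h3 : a * M' ≤ r * c := by
      have h' := mul_le_mul_of_nonneg_right h hM.le
      rwa [mul_assoc, div_mul_cancel₀ c (ne_of_gt hM)] at h'
    rw [show c*(r/a) = c*r/a from (mul_div_assoc c r a).symm, le_div_iff₀ ha]
    linarith

/-- Theorem 1, balancing condition for static DF-MAC-BC: if `K, M ≥ 1`
and `r > 0` satisfies `r(max(1, 2K/M) + max(1, K/M)) < 1`, then there is a time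
allocation `a* ∈ (0,1)` with `d^MAC-sym_{2K,1,M}(r/a*) = d^MAC-sym_{K,1,M}(r/(1-a*)) > 0`,
and the sup over `a ∈ (0,1)` of the min of the two phase exponents equals this common
value. -/
theorem stmt5 (K M : ℕ) (hK : 1 ≤ K) (hM : 1 ≤ M) (r : ℝ) (hr : 0 < r)
    (hcond : r * (max 1 ((2 * (K : ℝ)) / (M : ℝ)) + max 1 ((K : ℝ) / (M : ℝ))) < 1) :
    ∃ a ∈ Set.Ioo (0 : ℝ) 1,
      dMACsym (2 * K) 1 M (r / a) = dMACsym K 1 M (r / (1 - a)) ∧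
      0 < dMACsym K 1 M (r / (1 - a)) ∧
      sSup ((fun b : ℝ =>
          min (dMACsym (2 * K) 1 M (r / b)) (dMACsym K 1 M (r / (1 - b)))) ''
          Set.Ioo 0 1)
        = dMACsym K 1 M (r / (1 - a)) := by
  have hM0 : (0:ℝ) < M := by exact_mod_cast hM
  have hK0 : (0:ℝ) < K := by exact_mod_cast hK
  have hK2 : 1 ≤ 2*K := by omega
  set c1 : ℝ := max 1 ((2 * (K:ℝ))/M) with hc1
  set c2 : ℝ := max 1 ((K:ℝ)/M) with hc2
  have hc1p : (0:ℝ) < c1 := lt_of_lt_of_le one_pos (le_max_left _ _)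
  have hc2p : (0:ℝ) < c2 := lt_of_lt_of_le one_pos (le_max_left _ _)
  set α : ℝ := r * c1 with hα
  set β : ℝ := 1 - r * c2 with hβ
  have hα0 : 0 < α := mul_pos hr hc1p
  have hαβ : α < β := by
    simp only [hα, hβ]
    nlinarith
  have hβ1 : β < 1 := by
    simp only [hβ]
    nlinarith
  -- cast facts
  have hcast2 : ((2*K : ℕ):ℝ) = 2*(K:ℝ) := by push_cast; ring
  -- the balancing function
  set F : ℝ → ℝ := fun a => Gf (2*K) M (r/a) - Gf K M (r/(1-a)) with hF
  have hcont : ContinuousOn F (Set.Icc α β) := by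
    apply ContinuousOn.sub
    · apply (Gf_cont (2*K) M).comp_continuousOn
      apply ContinuousOn.div continuousOn_const continuousOn_id
      intro x hx
      exact ne_of_gt (lt_of_lt_of_le hα0 hx.1)
    · apply (Gf_cont K M).comp_continuousOn
      apply ContinuousOn.div continuousOn_const (by fun_prop)
      intro x hx
      have hx2 := hx.2
      have : (0:ℝ) < 1 - x := by linarith
      exact ne_of_gt this
  have hFα : F α < 0 := by
    have h1 : Gf (2*K) M (r/α) ≤ 0 := by
      apply Gf_nonpos _ _ hM
      have := key2 (2*(K:ℝ)) r α M hr hα0 hM0 (le_of_eq hα)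
      rcases this with h | h
      · exact Or.inl h
      · right; rw [hcast2]; linarith
    have h2 : 0 < Gf K M (r/(1-α)) := by
      have hβα : 0 < 1 - α := by linarith
      have hk := key (K:ℝ) r (1-α) M hr hβα hM0 (by simp only [hβ] at hαβ; linarith)
      exact Gf_pos K M hM _ hk.1 hk.2
    simp only [hF]
    linarith
  have hFβ : 0 < F β := by
    have hβ0 : 0 < β := lt_trans hα0 hαβ
    have h1 : 0 < Gf (2*K) M (r/β) := by
      have hk := key (2*(K:ℝ)) r β M hr hβ0 hM0 (by rw [← hα]; exact hαβ)
      refine Gf_pos _ M hM _ hk.1 ?_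
      rw [hcast2]; exact hk.2
    have h2 : Gf K M (r/(1-β)) ≤ 0 := by
      apply Gf_nonpos _ _ hM
      exact key2 (K:ℝ) r (1-β) M hr (by simp only [hβ]; nlinarith) hM0 (by simp only [hβ]; ring_nf; rfl)
    simp only [hF]
    linarith
  have hsub := intermediate_value_Ioo (le_of_lt hαβ) hcont
  have h0mem : (0:ℝ) ∈ Set.Ioo (F α) (F β) := ⟨hFα, hFβ⟩
  obtain ⟨a, ha, hFa⟩ := hsub h0mem
  have ha0 : 0 < a := lt_trans hα0 ha.1
  have ha1 : a < 1 := lt_trans ha.2 hβ1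
  have h1a : 0 < 1 - a := by linarith
  -- arguments in range
  have hk1 := key (2*(K:ℝ)) r a M hr ha0 hM0 ha.1
  have hk2 := key (K:ℝ) r (1-a) M hr h1a hM0 (by simp only [hβ] at ha; linarith [ha.2])
  have hd1 : dMACsym (2*K) 1 M (r/a) = Gf (2*K) M (r/a) :=
    dMAC_eq (2*K) M hK2 hM _ (div_pos hr ha0) hk1.1 (by rw [hcast2]; exact hk1.2)
  have hd2 : dMACsym K 1 M (r/(1-a)) = Gf K M (r/(1-a)) :=
    dMAC_eq K M hK hM _ (div_pos hr h1a) hk2.1 hk2.2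
  have heq : dMACsym (2*K) 1 M (r/a) = dMACsym K 1 M (r/(1-a)) := by
    rw [hd1, hd2]
    have : F a = 0 := hFa
    simp only [hF] at this
    linarith
  have hpos : 0 < dMACsym K 1 M (r/(1-a)) := by
    rw [hd2]; exact Gf_pos K M hM _ hk2.1 hk2.2
  refine ⟨a, ⟨ha0, ha1⟩, heq, hpos, ?_⟩
  set V := dMACsym K 1 M (r/(1-a)) with hV
  apply IsGreatest.csSup_eq
  constructor
  · exact ⟨a, ⟨ha0, ha1⟩, by simp only [heq]; exact min_self _⟩
  · rintro x ⟨b, hb, rfl⟩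
    simp only
    rcases le_total b a with hba | hba
    · apply le_trans (min_le_left _ _)
      rcases le_or_gt b α with hbα | hbα
      · have : dMACsym (2*K) 1 M (r/b) = 0 := by
          apply dMAC_zero _ _ hK2 hM
          have := key2 (2*(K:ℝ)) r b M hr hb.1 hM0 hbα
          rcases this with h | h
          · exact Or.inl h
          · right; rw [hcast2]; linarith
        rw [this]; exact hpos.le
      · have hkb := key (2*(K:ℝ)) r b M hr hb.1 hM0 hbα
        have hdb : dMACsym (2*K) 1 M (r/b) = Gf (2*K) M (r/b) :=
          dMAC_eq (2*K) M hK2 hM _ (div_pos hr hb.1) hkb.1 (by rw [hcast2]; exact hkb.2)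
        rw [hdb, ← heq, hd1]
        apply Gf_anti
        exact div_le_div_of_nonneg_left hr.le hb.1 hba
    · apply le_trans (min_le_right _ _)
      have h1b : 0 < 1 - b := by linarith [hb.2]
      rcases le_or_gt (1 - b) (r * c2) with hbβ | hbβ
      · have : dMACsym K 1 M (r/(1-b)) = 0 := by
          apply dMAC_zero _ _ hK hM
          exact key2 (K:ℝ) r (1-b) M hr h1b hM0 hbβ
        rw [this]; exact hpos.le
      · have hkb := key (K:ℝ) r (1-b) M hr h1b hM0 hbβ
        have hdb : dMACsym K 1 M (r/(1-b)) = Gf K M (r/(1-b)) :=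
          dMAC_eq K M hK hM _ (div_pos hr h1b) hkb.1 hkb.2
        rw [hdb, hd2]
        apply Gf_anti
        apply div_le_div_of_nonneg_left hr.le h1b
        linarith
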